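/- Separation of DTM values (Proposition 3.6, unweighted case): let P = (1−ε)P₀ + εP₁ on ℝ^d with ε ∈ [0,1), suppose dist(S₀, S₁) ≥ η where S₀, S₁ are the supports of P₀, P₁, and let m ∈ (ε, 1), q ≥ 1, h > 0. Suppose x ∈ S₀ satisfies the (a(x), b)-condition P₀(B(x,r)) ≥ min{1, a(x) r^b} with a(x) > (m/(1−ε)) · ((b+q)/b · ((m−ε)/m · η^q − h))^{−b/q}, where (m−ε)/m · η^q − h > 0 and m ≤ 1−ε. Then d_{P,m,q}(x)^q + h < inf_{y ∈ S₁} d_{P,m,q}(y)^q, where d_{P,m,q}(z)^q = (1/m)∫₀^m r_{P,t}(z)^q dt. -/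

import Mathlib

open MeasureTheory Metric Set

noncomputable def rad {d : ℕ} (P : Measure (EuclideanSpace ℝ (Fin d))) (p : ℝ)
    (x : EuclideanSpace ℝ (Fin d)) : ℝ :=
  sInf {r : ℝ | 0 < r ∧ p ≤ (P (closedBall x r)).toReal}

theorem stmt12 {d : ℕ} (P₀ P₁ : Measure (EuclideanSpace ℝ (Fin d)))
    [IsProbabilityMeasure P₀] [IsProbabilityMeasure P₁]
    (S₀ S₁ : Set (EuclideanSpace ℝ (Fin d)))
    (hS₀ : P₀ S₀ᶜ = 0) (hS₁ : P₁ S₁ᶜ = 0) (hS₁ne : S₁.Nonempty)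
    (ε η m q b h a : ℝ) (hε : ε ∈ Set.Ico (0:ℝ) 1) (hη : 0 < η)
    (hsep : ∀ x' ∈ S₀, ∀ z ∈ S₁, η ≤ dist x' z)
    (hm : m ∈ Set.Ioo ε 1) (hmε : m ≤ 1 - ε) (hq : 1 ≤ q) (hb : 0 < b) (hh : 0 < h)
    (hpos : 0 < (m - ε) / m * η ^ q - h)
    (x : EuclideanSpace ℝ (Fin d)) (hx : x ∈ S₀)
    (hab : ∀ r : ℝ, 0 < r → min 1 (a * r ^ b) ≤ (P₀ (closedBall x r)).toReal)
    (ha : (m / (1 - ε)) *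
        ((b + q) / b * ((m - ε) / m * η ^ q - h)) ^ (-(b / q)) < a) :
    (1 / m) * (∫ t in (0:ℝ)..m,
        rad (ENNReal.ofReal (1 - ε) • P₀ + ENNReal.ofReal ε • P₁) t x ^ q) + h
      < sInf ((fun y => (1 / m) * ∫ t in (0:ℝ)..m,
          rad (ENNReal.ofReal (1 - ε) • P₀ + ENNReal.ofReal ε • P₁) t y ^ q) '' S₁) := by
  obtain ⟨hε0, hε1⟩ := hε
  obtain ⟨hεm, hm1⟩ := hm
  have h1ε : (0:ℝ) < 1 - ε := by linarith
  have hm0 : (0:ℝ) < m := lt_of_le_of_lt hε0 hεm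
  have hq0 : (0:ℝ) < q := lt_of_lt_of_le one_pos hq
  set Pm : Measure (EuclideanSpace ℝ (Fin d)) :=
    ENNReal.ofReal (1 - ε) • P₀ + ENNReal.ofReal ε • P₁ with hPm
  -- Pm is a probability measure
  have hPuniv : Pm univ = 1 := by
    simp only [hPm, Measure.add_apply, Measure.smul_apply, smul_eq_mul, measure_univ, mul_one]
    rw [← ENNReal.ofReal_add h1ε.le hε0]
    norm_num
  haveI : IsProbabilityMeasure Pm := ⟨hPuniv⟩
  -- ball measure formula
  have hball : ∀ (z : EuclideanSpace ℝ (Fin d)) (r : ℝ), (Pm (closedBall z r)).toReal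
      = (1 - ε) * (P₀ (closedBall z r)).toReal + ε * (P₁ (closedBall z r)).toReal := by
    intro z r
    rw [hPm]
    simp only [Measure.add_apply, Measure.smul_apply, smul_eq_mul]
    rw [ENNReal.toReal_add (by finiteness) (by finiteness), ENNReal.toReal_mul,
      ENNReal.toReal_mul, ENNReal.toReal_ofReal h1ε.le, ENNReal.toReal_ofReal hε0]
  -- the defining sets are nonempty for t ≤ m
  have hnonempty : ∀ (z : EuclideanSpace ℝ (Fin d)) (t : ℝ), t ≤ m →
      {r : ℝ | 0 < r ∧ t ≤ (Pm (closedBall z r)).toReal}.Nonempty := by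
    intro z t ht
    have hU : (⋃ n : ℕ, closedBall z n) = univ := by
      ext p
      simp only [mem_iUnion, mem_closedBall, mem_univ, iff_true]
      exact ⟨⌈dist p z⌉₊, Nat.le_ceil _⟩
    have htend : Filter.Tendsto (fun n : ℕ => Pm (closedBall z n)) Filter.atTop (nhds 1) := by
      have := tendsto_measure_iUnion_atTop (μ := Pm)
        (s := fun n : ℕ => closedBall z n)
        (fun i j hij => closedBall_subset_closedBall (by exact_mod_cast hij))
      rwa [hU, hPuniv] at this
    have hlt : ENNReal.ofReal m < 1 := by
      rw [← ENNReal.ofReal_one]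
      exact (ENNReal.ofReal_lt_ofReal_iff_of_nonneg hm0.le).2 hm1
    obtain ⟨n, hn⟩ := (htend.eventually (Ioi_mem_nhds hlt)).exists
    refine ⟨(n : ℝ) + 1, by positivity, ?_⟩
    have hle : Pm (closedBall z n) ≤ Pm (closedBall z ((n:ℝ) + 1)) :=
      measure_mono (closedBall_subset_closedBall (by linarith))
    have hfin : ENNReal.ofReal m ≤ Pm (closedBall z ((n:ℝ) + 1)) := le_trans (le_of_lt hn) hle
    calc t ≤ m := ht
      _ ≤ (Pm (closedBall z ((n:ℝ) + 1))).toReal :=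
        (ENNReal.ofReal_le_iff_le_toReal (measure_ne_top _ _)).1 hfin
  have hbdd : ∀ (z : EuclideanSpace ℝ (Fin d)) (t : ℝ),
      BddBelow {r : ℝ | 0 < r ∧ t ≤ (Pm (closedBall z r)).toReal} :=
    fun z t => ⟨0, fun r hr => hr.1.le⟩
  have hrad_nonneg : ∀ (z : EuclideanSpace ℝ (Fin d)) (t : ℝ), 0 ≤ rad Pm t z :=
    fun z t => Real.sInf_nonneg (fun r hr => hr.1.le)
  -- monotonicity of rad^q
  have hmono : ∀ (z : EuclideanSpace ℝ (Fin d)),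
      MonotoneOn (fun t => rad Pm t z ^ q) (Icc (0:ℝ) m) := by
    intro z t ht t' ht' htt'
    have hr : rad Pm t z ≤ rad Pm t' z := by
      apply csInf_le_csInf (hbdd z t) (hnonempty z t' ht'.2)
      intro r hr
      exact ⟨hr.1, le_trans htt' hr.2⟩
    exact Real.rpow_le_rpow (hrad_nonneg z t) hr hq0.le
  have hintegrable : ∀ (z : EuclideanSpace ℝ (Fin d)),
      IntervalIntegrable (fun t => rad Pm t z ^ q) volume 0 m := by
    intro z
    apply MonotoneOn.intervalIntegrable
    rw [uIcc_of_le hm0.le]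
    exact hmono z
  -- auxiliary constants
  set D : ℝ := (m - ε) / m * η ^ q - h with hDdef
  set C : ℝ := (b + q) / b * D with hCdef
  have hC : (0:ℝ) < C := mul_pos (by positivity) hpos
  have ha0 : (0:ℝ) < a := lt_trans (by positivity) ha
  set c : ℝ := a * (1 - ε) with hcdef
  have hc0 : (0:ℝ) < c := mul_pos ha0 h1ε
  -- upper bound for rad at x
  have hub : ∀ t ∈ Icc (0:ℝ) m, rad Pm t x ^ q ≤ (t / c) ^ (q / b) := by
    intro t ht
    rcases eq_or_lt_of_le ht.1 with h0 | h0
    · have hset : {r : ℝ | 0 < r ∧ t ≤ (Pm (closedBall x r)).toReal} = Ioi 0 := by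
        ext r
        simp [← h0, ENNReal.toReal_nonneg]
      have hz : rad Pm t x = 0 := by rw [rad, hset, csInf_Ioi]
      rw [hz, ← h0, Real.zero_rpow (by positivity)]
      positivity
    · set ρ : ℝ := (t / c) ^ (1 / b) with hρdef
      have htc0 : 0 < t / c := div_pos h0 hc0
      have hρ0 : 0 < ρ := Real.rpow_pos_of_pos htc0 _
      have hρb : ρ ^ b = t / c := by
        rw [hρdef, ← Real.rpow_mul htc0.le, one_div_mul_cancel hb.ne', Real.rpow_one]
      have habρ : a * ρ ^ b = t / (1 - ε) := by
        rw [hρb, hcdef]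
        field_simp
      have hmin : min 1 (a * ρ ^ b) = t / (1 - ε) := by
        rw [habρ, min_eq_right]
        rw [div_le_one h1ε]
        linarith [ht.2]
      have hmem : t ≤ (Pm (closedBall x ρ)).toReal := by
        rw [hball]
        have h₀ : t / (1 - ε) ≤ (P₀ (closedBall x ρ)).toReal := by
          rw [← hmin]; exact hab ρ hρ0
        have h₁ : 0 ≤ ε * (P₁ (closedBall x ρ)).toReal := by positivity
        nlinarith [mul_le_mul_of_nonneg_left h₀ h1ε.le,
          mul_div_cancel₀ t h1ε.ne']
      have hle : rad Pm t x ≤ ρ := csInf_le (hbdd x t) ⟨hρ0, hmem⟩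
      calc rad Pm t x ^ q ≤ ρ ^ q := Real.rpow_le_rpow (hrad_nonneg x t) hle hq0.le
        _ = (t / c) ^ (q / b) := by
            rw [hρdef, ← Real.rpow_mul htc0.le]
            congr 1
            field_simp
  -- integral upper bound
  have hgint : IntervalIntegrable (fun t => (t / c) ^ (q / b)) volume 0 m := by
    apply MonotoneOn.intervalIntegrable
    rw [uIcc_of_le hm0.le]
    intro t ht t' ht' htt'
    exact Real.rpow_le_rpow (div_nonneg ht.1 hc0.le) (by gcongr)
      (div_nonneg hq0.le hb.le)
  have hintub : ∫ t in (0:ℝ)..m, rad Pm t x ^ q ≤ m ^ (q / b + 1) / (q / b + 1) / c ^ (q / b) := by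
    have h1 : ∫ t in (0:ℝ)..m, rad Pm t x ^ q ≤ ∫ t in (0:ℝ)..m, (t / c) ^ (q / b) :=
      intervalIntegral.integral_mono_on hm0.le (hintegrable x) hgint hub
    have h2 : ∫ t in (0:ℝ)..m, (t / c) ^ (q / b)
        = ∫ t in (0:ℝ)..m, t ^ (q / b) / c ^ (q / b) := by
      apply intervalIntegral.integral_congr
      intro t ht
      rw [uIcc_of_le hm0.le] at ht
      exact Real.div_rpow ht.1 hc0.le _
    have h3 : ∫ t in (0:ℝ)..m, t ^ (q / b) = m ^ (q / b + 1) / (q / b + 1) := by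
      rw [integral_rpow (Or.inl (lt_of_lt_of_le neg_one_lt_zero (by positivity))),
        Real.zero_rpow (by positivity : (0:ℝ) < q / b + 1).ne', sub_zero]
    rw [h2, intervalIntegral.integral_div, h3] at h1
    exact h1
  -- main upper estimate
  have hkey : (1 / m) * (∫ t in (0:ℝ)..m, rad Pm t x ^ q) + h < (m - ε) / m * η ^ q := by
    have hcC : m * C ^ (-(b / q)) < c := by
      have h1 := mul_lt_mul_of_pos_right ha h1ε
      rw [hcdef]
      calc m * C ^ (-(b / q)) = m / (1 - ε) * C ^ (-(b / q)) * (1 - ε) := by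
            field_simp
        _ < a * (1 - ε) := h1
    have hCp : (0:ℝ) < C ^ (b / q) := Real.rpow_pos_of_pos hC _
    have hmc : m / c < C ^ (b / q) := by
      rw [div_lt_iff₀ hc0]
      rw [Real.rpow_neg hC.le] at hcC
      calc m = m * (C ^ (b / q))⁻¹ * C ^ (b / q) := by field_simp
        _ < c * C ^ (b / q) := mul_lt_mul_of_pos_right hcC hCp
        _ = C ^ (b / q) * c := mul_comm _ _
    have hpow : (m / c) ^ (q / b) < C := by
      have := Real.rpow_lt_rpow (by positivity) hmc (by positivity : (0:ℝ) < q / b)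
      rwa [← Real.rpow_mul hC.le, div_mul_div_comm, mul_comm b q, div_self (by positivity),
        Real.rpow_one] at this
    have hU : (1 / m) * (m ^ (q / b + 1) / (q / b + 1) / c ^ (q / b))
        = b / (b + q) * (m / c) ^ (q / b) := by
      rw [Real.rpow_add_one hm0.ne', Real.div_rpow hm0.le hc0.le]
      have hbq : q / b + 1 = (q + b) / b := by field_simp
      rw [hbq]
      field_simp
      ring
    have hUb : (1 / m) * (∫ t in (0:ℝ)..m, rad Pm t x ^ q)
        ≤ b / (b + q) * (m / c) ^ (q / b) := by
      rw [← hU]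
      exact mul_le_mul_of_nonneg_left hintub (by positivity)
    have hfin : b / (b + q) * (m / c) ^ (q / b) < D := by
      have := mul_lt_mul_of_pos_left hpow (show (0:ℝ) < b / (b + q) by positivity)
      calc b / (b + q) * (m / c) ^ (q / b) < b / (b + q) * C := this
        _ = D := by rw [hCdef]; field_simp
    rw [hDdef] at hfin
    linarith
  -- lower bound at points of S₁
  have hlb : ∀ y ∈ S₁, (m - ε) / m * η ^ q
      ≤ (1 / m) * ∫ t in (0:ℝ)..m, rad Pm t y ^ q := by
    intro y hy
    have hI1 : IntervalIntegrable (fun t => rad Pm t y ^ q) volume 0 ε :=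
      (hintegrable y).mono_set (by rw [uIcc_of_le hε0, uIcc_of_le hm0.le]
                                   exact Icc_subset_Icc le_rfl hεm.le)
    have hI2 : IntervalIntegrable (fun t => rad Pm t y ^ q) volume ε m :=
      (hintegrable y).mono_set (by rw [uIcc_of_le hεm.le, uIcc_of_le hm0.le]
                                   exact Icc_subset_Icc hε0 le_rfl)
    have hradlb : ∀ t ∈ Ioc ε m, η ≤ rad Pm t y := by
      intro t ht
      apply le_csInf (hnonempty y t ht.2)
      intro r hr
      by_contra hcon
      push_neg at hcon
      have hsub : closedBall y r ⊆ S₀ᶜ := by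
        intro p hp hpS₀
        have h1 := hsep p hpS₀ y hy
        rw [mem_closedBall] at hp
        linarith
      have hP₀0 : P₀ (closedBall y r) = 0 :=
        measure_mono_null hsub hS₀
      have hPle : (Pm (closedBall y r)).toReal ≤ ε := by
        rw [hball, hP₀0]
        have h₁ : (P₁ (closedBall y r)).toReal ≤ 1 := by
          apply ENNReal.toReal_le_of_le_ofReal one_pos.le
          simpa using prob_le_one
        simp only [ENNReal.toReal_zero, mul_zero, zero_add]
        nlinarith
      linarith [hr.2, ht.1]
    have hae : ∀ᵐ t ∂(volume.restrict (Icc ε m)), η ^ q ≤ rad Pm t y ^ q := by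
      have hne : ∀ᵐ t ∂(volume.restrict (Icc ε m)), t ≠ ε := by
        rw [ae_iff]
        have : {t : ℝ | ¬ t ≠ ε} = {ε} := by ext t; simp
        rw [this]
        exact le_antisymm (le_trans (Measure.restrict_apply_le _ _) (by simp)) zero_le
      filter_upwards [hne, ae_restrict_mem measurableSet_Icc] with t ht htm
      have : t ∈ Ioc ε m := ⟨lt_of_le_of_ne htm.1 (Ne.symm ht), htm.2⟩
      exact Real.rpow_le_rpow hη.le (hradlb t this) hq0.le
    have h2 : (m - ε) * η ^ q ≤ ∫ t in ε..m, rad Pm t y ^ q := by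
      have := intervalIntegral.integral_mono_ae_restrict hεm.le
        (intervalIntegrable_const (c := η ^ q)) hI2 hae
      rwa [intervalIntegral.integral_const, smul_eq_mul] at this
    have h3 : 0 ≤ ∫ t in (0:ℝ)..ε, rad Pm t y ^ q :=
      intervalIntegral.integral_nonneg hε0
        (fun u _ => Real.rpow_nonneg (hrad_nonneg y u) q)
    have h4 : (m - ε) * η ^ q ≤ ∫ t in (0:ℝ)..m, rad Pm t y ^ q := by
      rw [← intervalIntegral.integral_add_adjacent_intervals hI1 hI2]
      linarith
    have := mul_le_mul_of_nonneg_left h4 (show (0:ℝ) ≤ 1 / m by positivity)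
    calc (m - ε) / m * η ^ q = (1 / m) * ((m - ε) * η ^ q) := by ring
      _ ≤ _ := this
  -- conclusion
  refine lt_of_lt_of_le hkey (le_csInf (hS₁ne.image _) ?_)
  rintro v ⟨y, hy, rfl⟩
  exact hlb y hy
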